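/- Let X be a normed space, F ⊆ X nonempty closed convex with 0 ∈ F, and Q ⊆ X nonempty. If x ∈ Q − F_∞ (i.e., x = ω − d for some ω ∈ Q, d ∈ F_∞), then the minimal time function satisfies T(x) = 0, where T(x) = inf{t ≥ 0 : (x + t•F) ∩ Q ≠ ∅}. -/

import Mathlib

open scoped ENNReal Pointwise

/-- The asymptotic cone of `F` at base point `x`. -/
def asympCone {X : Type*} [NormedAddCommGroup X] [NormedSpace ℝ X]
    (F : Set X) (x : X) : Set X :=
  {d | ∀ t : ℝ, 0 < t → x + t • d ∈ F}

/-- The minimal time function `T_Q^F`. -/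
noncomputable def minTime {X : Type*} [NormedAddCommGroup X] [NormedSpace ℝ X]
    (F Q : Set X) (x : X) : ℝ≥0∞ :=
  sInf (ENNReal.ofReal '' {t : ℝ | 0 ≤ t ∧ ∃ f ∈ F, x + t • f ∈ Q})

theorem minTime_eq_zero_of_mem {X : Type*} [NormedAddCommGroup X] [NormedSpace ℝ X]
    (F : Set X) (hFne : F.Nonempty) (hFcl : IsClosed F) (hFconv : Convex ℝ F)
    (h0F : (0 : X) ∈ F) (Q : Set X) (hQne : Q.Nonempty)
    (x : X) (hx : x ∈ Q - asympCone F 0) :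
    minTime F Q x = 0 := by
  obtain ⟨ω, hω, d, hd, hxd⟩ := hx
  -- for every t > 0, t belongs to the admissible set
  have key : ∀ t : ℝ, 0 < t → minTime F Q x ≤ ENNReal.ofReal t := by
    intro t ht
    apply sInf_le
    refine ⟨t, ⟨ht.le, (1/t) • d, ?_, ?_⟩, rfl⟩
    · have := hd (1/t) (by positivity)
      simpa using this
    · have : x + t • ((1/t) • d) = ω := by
        rw [smul_smul, mul_one_div_cancel ht.ne', one_smul, ← hxd]
        module
      rw [this]; exact hω
  refine le_antisymm ?_ zero_le
  refine ENNReal.le_of_forall_pos_le_add ?_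
  intro ε hε _
  have := key ε (by exact_mod_cast hε)
  simpa using this.trans_eq (by simp)
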